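/- For every canonically integrable function α ∈ I₁ over a pre-integration space, the partial sums of its representation converge to it in 1-norm: lim_{N→∞} ∫|α − ∑_{n=1}^N α(n)| = 0. Consequently, the image of I under the embedding i ↦ (i, 0·i, 0·i, …) is dense in (I₁, ‖·‖₁), and the embedding is norm-preserving. -/

import Mathlib

open Filter Topology

/-- A pre-integration space `(X, I, Λ, ∫)`: an inhabited set `X` with an
apartness relation, an `I`-set `Λ` of real-valued partial functions on `X`
(each index `i` has a domain `dom i` and a function `f i`, and equal partial
functions have equal indices), operations on `I` realizing scalar
multiplication, addition, absolute value and min-with-1 of the partial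
functions, and a functional `∫ = integ : I → ℝ` satisfying (PIS1)–(PIS4). -/
structure PreIntegrationSpace (X I : Type*) where
  inhab : Nonempty X
  apart : X → X → Prop
  apart_irrefl : ∀ x y : X, x = y → apart x y → False
  apart_symm : ∀ x y : X, apart x y → apart y x
  apart_cotrans : ∀ x y : X, apart x y → ∀ z : X, apart x z ∨ apart y z
  dom : I → Set X
  f : I → X → ℝ
  lam_set : ∀ i j : I, dom i = dom j → (∀ x ∈ dom i, f i x = f j x) → i = j
  smul : ℝ → I → I
  add : I → I → I
  abs : I → I
  min1 : I → I
  integ : I → ℝ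
  dom_smul : ∀ a i, dom (smul a i) = dom i
  f_smul : ∀ a i, ∀ x ∈ dom i, f (smul a i) x = a * f i x
  dom_add : ∀ i j, dom (add i j) = dom i ∩ dom j
  f_add : ∀ i j, ∀ x ∈ dom i ∩ dom j, f (add i j) x = f i x + f j x
  dom_abs : ∀ i, dom (abs i) = dom i
  f_abs : ∀ i, ∀ x ∈ dom i, f (abs i) x = |f i x|
  dom_min1 : ∀ i, dom (min1 i) = dom i
  f_min1 : ∀ i, ∀ x ∈ dom i, f (min1 i) x = min (f i x) 1
  pis1 : ∀ (a b : ℝ) (i j : I),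
    integ (add (smul a i) (smul b j)) = a * integ i + b * integ j
  pis2 : ∀ (i : I) (α : ℕ → I) (ℓ : ℝ),
    (∀ m, ∀ x ∈ dom (α m), 0 ≤ f (α m) x) →
    Tendsto (fun n => ∑ k ∈ Finset.range n, integ (α k)) atTop (𝓝 ℓ) →
    ℓ < integ i →
    ∃ x, x ∈ dom i ∧ (∀ n, x ∈ dom (α n)) ∧
      ∃ ℓ' : ℝ, Tendsto (fun n => ∑ k ∈ Finset.range n, f (α k) x) atTop (𝓝 ℓ') ∧
        ℓ' < f i x
  pis3 : ∃ i : I, integ i = 1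
  pis4 : ∀ i : I,
    Tendsto (fun m : ℕ => integ (smul (m : ℝ) (min1 (smul ((m : ℝ))⁻¹ i))))
      atTop (𝓝 (integ i)) ∧
    Tendsto (fun m : ℕ => integ (smul ((m : ℝ))⁻¹ (min1 (smul (m : ℝ) (abs i)))))
      atTop (𝓝 0)

variable {X I : Type*}

/-- Partial sums in the index set: `psum P α N = α(0) + ⋯ + α(N)`. -/
def psum (P : PreIntegrationSpace X I) (α : ℕ → I) : ℕ → I
  | 0 => α 0
  | n + 1 => P.add (psum P α n) (α (n + 1))

/-- `α : ℕ → I` is a representation, i.e. a member of `I₁`: the series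
`∑_n ∫|α(n)|` converges. -/
def InI1 (P : PreIntegrationSpace X I) (α : ℕ → I) : Prop :=
  ∃ L : ℝ,
    Tendsto (fun N => ∑ k ∈ Finset.range N, P.integ (P.abs (α k))) atTop (𝓝 L)

/-- The domain of the canonically integrable function represented by `α`:
the points of `⋂_n dom f_{α(n)}` where `∑_n |f_{α(n)}(x)|` converges. -/
def dom1 (P : PreIntegrationSpace X I) (α : ℕ → I) : Set X :=
  {x | (∀ n, x ∈ P.dom (α n)) ∧
    ∃ s : ℝ,
      Tendsto (fun N => ∑ k ∈ Finset.range N, |P.f (α k) x|) atTop (𝓝 s)}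

/-- The canonically integrable function represented by `α`:
`g_α(x) = ∑_n f_{α(n)}(x)`. -/
noncomputable def g1 (P : PreIntegrationSpace X I) (α : ℕ → I) (x : X) : ℝ :=
  ∑' n, P.f (α n) x

/-- `L` is the `1`-norm `∫|α| = lim_N ∫|∑_{k≤N} α(k)|` of `α ∈ I₁`. -/
def Norm1Is (P : PreIntegrationSpace X I) (α : ℕ → I) (L : ℝ) : Prop :=
  Tendsto (fun N => P.integ (P.abs (psum P α N))) atTop (𝓝 L)

/-- Addition in `I₁` by interleaving two representations. -/
def addSeq (P : PreIntegrationSpace X I) (α β : ℕ → I) : ℕ → I :=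
  fun m => if m % 2 = 0 then α (m / 2) else β (m / 2)

/-- Negation of a representation, termwise. -/
def negSeq (P : PreIntegrationSpace X I) (β : ℕ → I) : ℕ → I :=
  fun m => P.smul (-1) (β m)

/-- Subtraction `α − β` of representations. -/
def subSeq (P : PreIntegrationSpace X I) (α β : ℕ → I) : ℕ → I :=
  addSeq P α (negSeq P β)

/-- A representation of the partial sum `∑_{n<N} α(n)` of the canonically
integrable function represented by `α` (terms beyond `N` replaced by `0·α(k)`). -/
def truncSeq (P : PreIntegrationSpace X I) (α : ℕ → I) (N : ℕ) : ℕ → I :=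
  fun k => if k < N then α k else P.smul 0 (α k)

/-- The embedding `h : I → I₁`, `i ↦ (i, 0·i, 0·i, …)`. -/
def embedI1 (P : PreIntegrationSpace X I) (i : I) : ℕ → I :=
  fun k => if k = 0 then i else P.smul 0 i

section Lemmas

variable {X I : Type*} (P : PreIntegrationSpace X I)

lemma integ_smul (a : ℝ) (i : I) : P.integ (P.smul a i) = a * P.integ i := by
  have h : P.add (P.smul a i) (P.smul 0 i) = P.smul a i := by
    apply P.lam_set
    · simp [P.dom_add, P.dom_smul]
    · intro x hx
      simp only [P.dom_add, P.dom_smul, Set.inter_self] at hx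
      rw [P.f_add _ _ x (by simp [P.dom_smul, hx]),
        P.f_smul a i x hx, P.f_smul 0 i x hx]
      ring
  calc P.integ (P.smul a i) = P.integ (P.add (P.smul a i) (P.smul 0 i)) := by rw [h]
  _ = a * P.integ i + 0 * P.integ i := P.pis1 a 0 i i
  _ = a * P.integ i := by ring

lemma smul_one (i : I) : P.smul 1 i = i := by
  apply P.lam_set
  · rw [P.dom_smul]
  · intro x hx
    rw [P.dom_smul] at hx
    rw [P.f_smul 1 i x hx]; ring

lemma integ_add (i j : I) : P.integ (P.add i j) = P.integ i + P.integ j := by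
  have : P.add i j = P.add (P.smul 1 i) (P.smul 1 j) := by rw [smul_one, smul_one]
  rw [this, P.pis1]; ring

lemma abs_smul' (a : ℝ) (i : I) : P.abs (P.smul a i) = P.smul (|a|) (P.abs i) := by
  apply P.lam_set
  · simp [P.dom_abs, P.dom_smul]
  · intro x hx
    simp only [P.dom_abs, P.dom_smul] at hx
    rw [P.f_abs _ x (by simp [P.dom_smul, hx]), P.f_smul a i x hx,
      P.f_smul (|a|) _ x (by simp [P.dom_abs, hx]), P.f_abs i x hx, abs_mul]

lemma integ_nonneg (i : I) (h : ∀ x ∈ P.dom i, 0 ≤ P.f i x) : 0 ≤ P.integ i := by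
  by_contra hc
  push_neg at hc
  have h2 : 0 < P.integ (P.smul (-1) i) := by
    rw [integ_smul]; linarith
  obtain ⟨x, hx, hxa, ℓ', hℓ', hlt⟩ := P.pis2 (P.smul (-1) i) (fun _ => P.smul 0 i) 0
    (fun m x hx => by
      rw [P.dom_smul] at hx
      rw [P.f_smul 0 i x hx]; simp)
    (by
      have he : (fun n => ∑ k ∈ Finset.range n, P.integ (P.smul 0 i)) = fun _ => (0:ℝ) := by
        funext n; simp [integ_smul]
      rw [he]; exact tendsto_const_nhds)
    h2
  rw [P.dom_smul] at hx
  have hz : ℓ' = 0 := by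
    have ht : Tendsto (fun n => ∑ k ∈ Finset.range n, P.f (P.smul 0 i) x) atTop (𝓝 0) := by
      have he : (fun n => ∑ k ∈ Finset.range n, P.f (P.smul 0 i) x) = fun _ => (0:ℝ) := by
        funext n; simp [P.f_smul 0 i x hx]
      rw [he]; exact tendsto_const_nhds
    exact tendsto_nhds_unique hℓ' ht
  rw [hz, P.f_smul (-1) i x hx] at hlt
  have := h x hx
  linarith

lemma integ_mono (i j : I) (h : ∀ x, x ∈ P.dom i → x ∈ P.dom j → P.f i x ≤ P.f j x) :
    P.integ i ≤ P.integ j := by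
  have h0 : 0 ≤ P.integ (P.add j (P.smul (-1) i)) := by
    apply integ_nonneg
    intro x hx
    simp only [P.dom_add, P.dom_smul, Set.mem_inter_iff] at hx
    rw [P.f_add _ _ x (by simp [P.dom_smul, hx.1, hx.2]), P.f_smul (-1) i x hx.2]
    have := h x hx.2 hx.1
    linarith
  have heq : P.integ (P.add j (P.smul (-1) i)) = P.integ j - P.integ i := by
    have h1 : P.add j (P.smul (-1) i) = P.add (P.smul 1 j) (P.smul (-1) i) := by rw [smul_one]
    rw [h1, P.pis1]; ring
  linarith

lemma integ_abs_nonneg (i : I) : 0 ≤ P.integ (P.abs i) := by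
  apply integ_nonneg
  intro x hx
  rw [P.dom_abs] at hx
  rw [P.f_abs i x hx]
  exact abs_nonneg _

lemma mem_dom_psum (β : ℕ → I) (n : ℕ) (x : X) :
    x ∈ P.dom (psum P β n) ↔ ∀ m ≤ n, x ∈ P.dom (β m) := by
  induction n with
  | zero => simp [psum]
  | succ n ih =>
    rw [psum, P.dom_add, Set.mem_inter_iff, ih]
    constructor
    · rintro ⟨h1, h2⟩ m hm
      rcases Nat.eq_or_lt_of_le hm with h | h
      · exact h ▸ h2
      · exact h1 m (Nat.lt_succ_iff.1 h)
    · intro h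
      exact ⟨fun m hm => h m (le_trans hm (Nat.le_succ n)), h (n+1) le_rfl⟩

lemma f_psum (β : ℕ → I) (n : ℕ) (x : X) (hx : x ∈ P.dom (psum P β n)) :
    P.f (psum P β n) x = ∑ m ∈ Finset.range (n+1), P.f (β m) x := by
  induction n with
  | zero => simp [psum]
  | succ n ih =>
    have hx' := hx
    rw [psum, P.dom_add] at hx'
    rw [psum, P.f_add _ _ x hx', ih hx'.1]
    exact (Finset.sum_range_succ _ _).symm

lemma integ_psum (β : ℕ → I) (n : ℕ) :
    P.integ (psum P β n) = ∑ m ∈ Finset.range (n+1), P.integ (β m) := by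
  induction n with
  | zero => simp [psum]
  | succ n ih =>
    rw [psum, integ_add, ih]
    exact (Finset.sum_range_succ _ _).symm

end Lemmas
section Lemmas2

variable {X I : Type*} (P : PreIntegrationSpace X I)

lemma sum_ite_lt (t : ℕ → ℝ) {N q : ℕ} (h : N ≤ q) :
    ∑ j ∈ Finset.range q, (if j < N then t j else 0) = ∑ j ∈ Finset.range N, t j := by
  rw [← Finset.sum_subset (Finset.range_subset_range.2 h)
    (fun x _ hnx => if_neg (by simpa using hnx))]
  exact Finset.sum_congr rfl (fun j hj => if_pos (Finset.mem_range.1 hj))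

lemma interleave_sum (g h : ℕ → ℝ) (n : ℕ) :
    ∑ m ∈ Finset.range n, (if m % 2 = 0 then g (m/2) else h (m/2)) =
      (∑ j ∈ Finset.range ((n+1)/2), g j) + ∑ j ∈ Finset.range (n/2), h j := by
  induction n with
  | zero => simp
  | succ n ih =>
    rw [Finset.sum_range_succ, ih]
    rcases Nat.even_or_odd n with he | ho
    · have h1 : n % 2 = 0 := Nat.even_iff.1 he
      have h2 : (n+1+1)/2 = n/2 + 1 := by omega
      have h3 : (n+1)/2 = n/2 := by omega
      rw [if_pos h1, h2, h3]
      simp only [Finset.sum_range_succ]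
      ring
    · have h1 : n % 2 = 1 := Nat.odd_iff.1 ho
      have h2 : (n+1+1)/2 = (n+1)/2 := by omega
      have h3 : (n+1)/2 = n/2 + 1 := by omega
      rw [if_neg (by omega), h2, h3]
      simp only [Finset.sum_range_succ]
      ring

lemma summable_of_inI1 (β : ℕ → I) (hβ : InI1 P β) :
    Summable fun n => P.integ (P.abs (β n)) := by
  obtain ⟨L, hL⟩ := hβ
  have mono : Monotone (fun N => ∑ k ∈ Finset.range N, P.integ (P.abs (β k))) :=
    fun a b hab => Finset.sum_le_sum_of_subset_of_nonneg (Finset.range_subset_range.2 hab)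
      (fun i _ _ => integ_abs_nonneg P _)
  exact summable_of_sum_range_le (fun n => integ_abs_nonneg P _)
    (fun n => mono.ge_of_tendsto hL n)

lemma summable_half (t : ℕ → ℝ) (ht : ∀ n, 0 ≤ t n) (hs : Summable t) :
    Summable fun m => t (m/2) := by
  apply summable_of_sum_range_le (c := (∑' n, t n) + ∑' n, t n) (fun n => ht _)
  intro n
  have he : ∑ m ∈ Finset.range n, t (m/2)
      = (∑ j ∈ Finset.range ((n+1)/2), t j) + ∑ j ∈ Finset.range (n/2), t j := by
    simpa using interleave_sum t t n
  rw [he]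
  have h1 := Summable.sum_le_tsum (Finset.range ((n+1)/2)) (fun i _ => ht i) hs
  have h2 := Summable.sum_le_tsum (Finset.range (n/2)) (fun i _ => ht i) hs
  linarith

lemma norm1_exists (β : ℕ → I) (hs : Summable fun n => P.integ (P.abs (β n))) :
    ∃ r, Norm1Is P β r := by
  have hd : ∀ M : ℕ, dist (P.integ (P.abs (psum P β M))) (P.integ (P.abs (psum P β (M+1))))
      ≤ P.integ (P.abs (β (M+1))) := by
    intro M
    set A := psum P β M with hA
    have hB : psum P β (M+1) = P.add A (β (M+1)) := rfl
    rw [Real.dist_eq, abs_sub_le_iff]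
    constructor
    · -- ∫|A| - ∫|B| ≤ ∫|b|
      have hm := integ_mono P (P.abs A)
        (P.add (P.abs (psum P β (M+1))) (P.abs (β (M+1)))) ?_
      · rw [integ_add] at hm; linarith
      · intro x hx1 hx2
        rw [P.dom_abs] at hx1
        simp only [P.dom_add, P.dom_abs, Set.mem_inter_iff, hB] at hx2
        have hxb : x ∈ P.dom (β (M+1)) := hx2.2
        have hxB : x ∈ P.dom (P.add A (β (M+1))) := by rw [P.dom_add]; exact ⟨hx1, hxb⟩
        have hfB : P.f (P.add A (β (M+1))) x = P.f A x + P.f (β (M+1)) x :=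
          P.f_add _ _ x (by rw [P.dom_add] at hxB; exact hxB)
        rw [P.f_abs A x hx1, hB,
          P.f_add _ _ x (by simp [P.dom_abs]; exact ⟨hxB, hxb⟩),
          P.f_abs _ x hxB, P.f_abs _ x hxb, hfB]
        calc |P.f A x| = |(P.f A x + P.f (β (M+1)) x) + -(P.f (β (M+1)) x)| := by ring_nf
        _ ≤ |P.f A x + P.f (β (M+1)) x| + |-(P.f (β (M+1)) x)| := abs_add_le _ _
        _ = |P.f A x + P.f (β (M+1)) x| + |P.f (β (M+1)) x| := by rw [abs_neg]
    · -- ∫|B| - ∫|A| ≤ ∫|b|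
      have hm := integ_mono P (P.abs (psum P β (M+1)))
        (P.add (P.abs A) (P.abs (β (M+1)))) ?_
      · rw [integ_add] at hm; linarith
      · intro x hx1 hx2
        rw [P.dom_abs, hB, P.dom_add] at hx1
        have hxA : x ∈ P.dom A := hx1.1
        have hxb : x ∈ P.dom (β (M+1)) := hx1.2
        have hxB : x ∈ P.dom (P.add A (β (M+1))) := by rw [P.dom_add]; exact hx1
        have hfB : P.f (P.add A (β (M+1))) x = P.f A x + P.f (β (M+1)) x :=
          P.f_add _ _ x hx1
        rw [hB, P.f_abs _ x hxB,
          P.f_add (P.abs A) (P.abs (β (M+1))) x (by simp [P.dom_abs]; exact ⟨hxA, hxb⟩),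
          P.f_abs _ x hxA, P.f_abs _ x hxb, hfB]
        exact abs_add_le _ _
  have hcauchy : CauchySeq (fun M => P.integ (P.abs (psum P β M))) :=
    cauchySeq_of_dist_le_of_summable _ hd ((summable_nat_add_iff 1).2 hs)
  exact cauchySeq_tendsto_of_complete hcauchy

end Lemmas2
section Lemmas3

variable {X I : Type*} (P : PreIntegrationSpace X I)

lemma integ_abs_smul (a : ℝ) (i : I) :
    P.integ (P.abs (P.smul a i)) = |a| * P.integ (P.abs i) := by
  rw [abs_smul', integ_smul]

lemma dom_subSeq_trunc (α : ℕ → I) (N m : ℕ) :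
    P.dom (subSeq P α (truncSeq P α N) m) = P.dom (α (m/2)) := by
  by_cases h : m % 2 = 0 <;> by_cases h2 : m/2 < N <;>
    simp [subSeq, addSeq, negSeq, truncSeq, h, h2, P.dom_smul]

lemma f_subSeq_trunc (α : ℕ → I) (N m : ℕ) (x : X) (hx : x ∈ P.dom (α (m/2))) :
    P.f (subSeq P α (truncSeq P α N) m) x =
      if m % 2 = 0 then P.f (α (m/2)) x
      else (if m/2 < N then -(P.f (α (m/2)) x) else 0) := by
  by_cases h : m % 2 = 0
  · simp [subSeq, addSeq, negSeq, truncSeq, h]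
  · by_cases h2 : m/2 < N
    · simp only [subSeq, addSeq, negSeq, truncSeq, if_neg h, if_pos h2]
      rw [P.f_smul (-1) _ x hx]; ring
    · simp only [subSeq, addSeq, negSeq, truncSeq, if_neg h, if_neg h2]
      rw [P.f_smul (-1) _ x (by rw [P.dom_smul]; exact hx), P.f_smul 0 _ x hx]
      ring

lemma mem_dom_psum_subSeq_trunc (α : ℕ → I) (N M : ℕ) (x : X) :
    x ∈ P.dom (psum P (subSeq P α (truncSeq P α N)) M) ↔
      ∀ m ≤ M, x ∈ P.dom (α (m/2)) := by
  rw [mem_dom_psum]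
  constructor
  · intro h m hm; rw [← dom_subSeq_trunc P α N m]; exact h m hm
  · intro h m hm; rw [dom_subSeq_trunc]; exact h m hm

lemma f_psum_subSeq_trunc (α : ℕ → I) (N M : ℕ) (hM : 2*N ≤ M) (x : X)
    (hx : x ∈ P.dom (psum P (subSeq P α (truncSeq P α N)) M)) :
    P.f (psum P (subSeq P α (truncSeq P α N)) M) x
      = (∑ j ∈ Finset.range (M/2 + 1), P.f (α j) x) - ∑ j ∈ Finset.range N, P.f (α j) x := by
  have hdom := (mem_dom_psum_subSeq_trunc P α N M x).1 hx
  rw [f_psum P _ M x hx]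
  have hcongr : ∑ m ∈ Finset.range (M+1), P.f (subSeq P α (truncSeq P α N) m) x
      = ∑ m ∈ Finset.range (M+1),
        (if m % 2 = 0 then P.f (α (m/2)) x
         else (if m/2 < N then -(P.f (α (m/2)) x) else 0)) := by
    apply Finset.sum_congr rfl
    intro m hm
    exact f_subSeq_trunc P α N m x (hdom m (Nat.lt_succ_iff.1 (Finset.mem_range.1 hm)))
  rw [hcongr, interleave_sum (fun j => P.f (α j) x)
      (fun j => if j < N then -(P.f (α j) x) else 0) (M+1)]
  have h1 : (M+1+1)/2 = M/2 + 1 := by omega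
  have h2 : N ≤ (M+1)/2 := by omega
  rw [h1, sum_ite_lt (fun j => -(P.f (α j) x)) h2, Finset.sum_neg_distrib]
  ring

lemma integ_abs_psum_subSeq_trunc_le (α : ℕ → I) (N M : ℕ) (hM : 2*N ≤ M)
    (hsum : Summable fun n => P.integ (P.abs (α n))) :
    P.integ (P.abs (psum P (subSeq P α (truncSeq P α N)) M))
      ≤ (∑' n, P.integ (P.abs (α n))) - ∑ j ∈ Finset.range N, P.integ (P.abs (α j)) := by
  have hN : N ≤ M/2 := by omega
  set T := psum P (fun k => P.abs (α (N+k))) (M/2 - N) with hT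
  have hTdom : ∀ y : X, y ∈ P.dom T ↔ ∀ k ≤ M/2 - N, y ∈ P.dom (α (N+k)) := by
    intro y
    rw [mem_dom_psum]
    constructor
    · intro h k hk; have := h k hk; rwa [P.dom_abs] at this
    · intro h k hk; rw [P.dom_abs]; exact h k hk
  have step1 : P.integ (P.abs (psum P (subSeq P α (truncSeq P α N)) M)) ≤ P.integ T := by
    apply integ_mono
    intro x hx1 hx2
    rw [P.dom_abs] at hx1
    rw [P.f_abs _ x hx1, f_psum_subSeq_trunc P α N M hM x hx1]
    have hfT : P.f T x = ∑ k ∈ Finset.range (M/2 - N + 1), |P.f (α (N+k)) x| := by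
      rw [hT, f_psum P _ _ x hx2]
      apply Finset.sum_congr rfl
      intro k hk
      have hk' : k ≤ M/2 - N := Nat.lt_succ_iff.1 (Finset.mem_range.1 hk)
      have hxk := (hTdom x).1 hx2 k hk'
      exact P.f_abs _ x hxk
    rw [hfT]
    have he : (∑ j ∈ Finset.range (M/2 + 1), P.f (α j) x) - ∑ j ∈ Finset.range N, P.f (α j) x
        = ∑ j ∈ Finset.Ico N (M/2+1), P.f (α j) x := by
      rw [Finset.sum_Ico_eq_sub _ (by omega)]
    rw [he]
    calc |∑ j ∈ Finset.Ico N (M/2+1), P.f (α j) x|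
        ≤ ∑ j ∈ Finset.Ico N (M/2+1), |P.f (α j) x| := Finset.abs_sum_le_sum_abs _ _
      _ = ∑ k ∈ Finset.range (M/2+1-N), |P.f (α (N+k)) x| := by
          rw [Finset.sum_Ico_eq_sum_range]
      _ = ∑ k ∈ Finset.range (M/2-N+1), |P.f (α (N+k)) x| := by
          have hnum : M/2+1-N = M/2-N+1 := by omega
          rw [hnum]
  have step2 : P.integ T = ∑ j ∈ Finset.Ico N (M/2+1), P.integ (P.abs (α j)) := by
    rw [hT, integ_psum, Finset.sum_Ico_eq_sum_range]
    have hnum : M/2+1-N = M/2-N+1 := by omega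
    rw [hnum]
  have step3 : ∑ j ∈ Finset.Ico N (M/2+1), P.integ (P.abs (α j))
      ≤ (∑' n, P.integ (P.abs (α n))) - ∑ j ∈ Finset.range N, P.integ (P.abs (α j)) := by
    rw [Finset.sum_Ico_eq_sub _ (by omega)]
    have := Summable.sum_le_tsum (Finset.range (M/2+1)) (fun i _ => integ_abs_nonneg P (α i)) hsum
    linarith
  linarith

lemma summable_subSeq_trunc (α : ℕ → I) (N : ℕ)
    (hsum : Summable fun n => P.integ (P.abs (α n))) :
    Summable fun m => P.integ (P.abs (subSeq P α (truncSeq P α N) m)) := by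
  refine Summable.of_nonneg_of_le (fun m => integ_abs_nonneg P _) ?_
    (summable_half _ (fun n => integ_abs_nonneg P _) hsum)
  · intro m
    by_cases h : m % 2 = 0
    · simp [subSeq, addSeq, negSeq, h]
    · by_cases h2 : m/2 < N
      · simp only [subSeq, addSeq, negSeq, truncSeq, if_neg h, if_pos h2]
        rw [integ_abs_smul]
        simp
      · simp only [subSeq, addSeq, negSeq, truncSeq, if_neg h, if_neg h2]
        rw [integ_abs_smul, integ_abs_smul]
        simpa using integ_abs_nonneg P (α (m/2))

end Lemmas3
section Lemmas4

variable {X I : Type*} (P : PreIntegrationSpace X I)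

lemma psum_embed (i : I) (M : ℕ) : psum P (embedI1 P i) M = i := by
  induction M with
  | zero => simp [psum, embedI1]
  | succ M ih =>
    show P.add (psum P (embedI1 P i) M) (embedI1 P i (M+1)) = i
    rw [ih]
    have he : embedI1 P i (M+1) = P.smul 0 i := by simp [embedI1]
    rw [he]
    apply P.lam_set
    · simp [P.dom_add, P.dom_smul]
    · intro x hx
      simp only [P.dom_add, P.dom_smul, Set.inter_self] at hx
      rw [P.f_add _ _ x (by simp [P.dom_smul, hx]), P.f_smul 0 i x hx]
      ring

lemma psum_subSeq_embed_eq (α : ℕ → I) (N M : ℕ) (hN : 1 ≤ N) (hM : 2*N ≤ M) :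
    psum P (subSeq P α (embedI1 P (psum P α (N-1)))) M
      = psum P (subSeq P α (truncSeq P α N)) M := by
  set i := psum P α (N-1) with hi
  have hdomi : ∀ y, y ∈ P.dom i ↔ ∀ k ≤ N-1, y ∈ P.dom (α k) :=
    fun y => mem_dom_psum P α (N-1) y
  have hdom1 : ∀ m, P.dom (subSeq P α (embedI1 P i) m)
      = if m % 2 = 0 then P.dom (α (m/2)) else P.dom i := by
    intro m
    by_cases h : m % 2 = 0 <;> by_cases h2 : m/2 = 0 <;>
      simp [subSeq, addSeq, negSeq, embedI1, h, h2, P.dom_smul]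
  have hdomeq : ∀ y, y ∈ P.dom (psum P (subSeq P α (embedI1 P i)) M) ↔
      ∀ m ≤ M, y ∈ P.dom (α (m/2)) := by
    intro y
    rw [mem_dom_psum]
    constructor
    · intro h m hm
      have h2m : 2*(m/2) ≤ M := by omega
      have := h (2*(m/2)) h2m
      rw [hdom1] at this
      rw [if_pos (by omega)] at this
      have hh : 2*(m/2)/2 = m/2 := by omega
      rwa [hh] at this
    · intro h m hm
      rw [hdom1]
      split
      · exact h m hm
      · rw [hdomi]
        intro k hk
        have h2k : 2*k ≤ M := by omega
        have := h (2*k) h2k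
        have hh : 2*k/2 = k := by omega
        rwa [hh] at this
  apply P.lam_set
  · ext y
    rw [hdomeq, mem_dom_psum_subSeq_trunc]
  · intro x hx
    have hxall : ∀ m ≤ M, x ∈ P.dom (α (m/2)) := (hdomeq x).1 hx
    have hxa : ∀ j, j ≤ M/2 → x ∈ P.dom (α j) := by
      intro j hj
      have := hxall (2*j) (by omega)
      have hh : 2*j/2 = j := by omega
      rwa [hh] at this
    have hxi : x ∈ P.dom i := by
      rw [hdomi]; intro k hk; exact hxa k (by omega)
    rw [f_psum P _ M x hx]
    have hL : ∑ m ∈ Finset.range (M+1), P.f (subSeq P α (embedI1 P i) m) x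
        = ∑ m ∈ Finset.range (M+1),
          (if m % 2 = 0 then P.f (α (m/2)) x else (if m/2 = 0 then -(P.f i x) else 0)) := by
      apply Finset.sum_congr rfl
      intro m hm
      by_cases h : m % 2 = 0
      · simp [subSeq, addSeq, negSeq, embedI1, h]
      · by_cases h2 : m/2 = 0
        · simp only [subSeq, addSeq, negSeq, embedI1, if_neg h, if_pos h2]
          rw [P.f_smul (-1) _ x hxi]; ring
        · simp only [subSeq, addSeq, negSeq, embedI1, if_neg h, if_neg h2]
          rw [P.f_smul (-1) _ x (by rw [P.dom_smul]; exact hxi), P.f_smul 0 _ x hxi]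
          ring
    rw [hL, interleave_sum (fun j => P.f (α j) x)
      (fun j => if j = 0 then -(P.f i x) else 0) (M+1)]
    have hx2 : x ∈ P.dom (psum P (subSeq P α (truncSeq P α N)) M) :=
      (mem_dom_psum_subSeq_trunc P α N M x).2 hxall
    rw [f_psum_subSeq_trunc P α N M hM x hx2]
    have hsum0 : ∑ j ∈ Finset.range ((M+1)/2), (if j = 0 then -(P.f i x) else 0)
        = -(P.f i x) := by
      rw [Finset.sum_ite_eq' (Finset.range ((M+1)/2)) 0 (fun _ => -(P.f i x)),
        if_pos (Finset.mem_range.2 (by omega))]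
    rw [hsum0]
    have hfi : P.f i x = ∑ j ∈ Finset.range N, P.f (α j) x := by
      rw [hi, f_psum P α (N-1) x hxi]
      have hh : N - 1 + 1 = N := by omega
      rw [hh]
    have h1 : (M+1+1)/2 = M/2 + 1 := by omega
    rw [h1, hfi]
    ring

end Lemmas4
/-- For every `α ∈ I₁`, the partial sums of its representation converge to it in
`1`-norm: `∫|α − ∑_{n<N} α(n)| → 0`. Consequently the embedding
`i ↦ (i, 0·i, …)` of `I` into `I₁` is norm-preserving and has dense image. -/
theorem partial_sums_tendsto_and_dense (P : PreIntegrationSpace X I) :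
    (∀ α : ℕ → I, InI1 P α →
      ∃ r : ℕ → ℝ,
        (∀ N, Norm1Is P (subSeq P α (truncSeq P α N)) (r N)) ∧
        Tendsto r atTop (𝓝 0)) ∧
    (∀ i : I, Norm1Is P (embedI1 P i) (P.integ (P.abs i))) ∧
    (∀ α : ℕ → I, InI1 P α → ∀ ε : ℝ, 0 < ε →
      ∃ i : I, ∃ L : ℝ, Norm1Is P (subSeq P α (embedI1 P i)) L ∧ L < ε) := by
  refine ⟨?_, ?_, ?_⟩
  · -- part 1
    intro α hα
    have hsum : Summable fun n => P.integ (P.abs (α n)) := summable_of_inI1 P α hα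
    choose r hr using fun N => norm1_exists P _ (summable_subSeq_trunc P α N hsum)
    refine ⟨r, hr, ?_⟩
    have h0 : ∀ N, 0 ≤ r N := fun N =>
      ge_of_tendsto (hr N) (Eventually.of_forall fun M => integ_abs_nonneg P _)
    have h1 : ∀ N, r N ≤ (∑' n, P.integ (P.abs (α n)))
        - ∑ j ∈ Finset.range N, P.integ (P.abs (α j)) := by
      intro N
      refine le_of_tendsto (hr N) (eventually_atTop.2 ⟨2*N, fun M hM => ?_⟩)
      exact integ_abs_psum_subSeq_trunc_le P α N M hM hsum
    have hu : Tendsto (fun N => (∑' n, P.integ (P.abs (α n)))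
        - ∑ j ∈ Finset.range N, P.integ (P.abs (α j))) atTop (𝓝 0) := by
      have ht := hsum.hasSum.tendsto_sum_nat
      have := (tendsto_const_nhds (x := ∑' n, P.integ (P.abs (α n)))
        (f := atTop (α := ℕ))).sub ht
      simpa using this
    exact tendsto_of_tendsto_of_tendsto_of_le_of_le tendsto_const_nhds hu h0 h1
  · -- part 2
    intro i
    unfold Norm1Is
    have he : (fun N => P.integ (P.abs (psum P (embedI1 P i) N)))
        = fun _ => P.integ (P.abs i) := funext fun N => by rw [psum_embed]
    rw [he]
    exact tendsto_const_nhds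
  · -- part 3
    intro α hα ε hε
    have hsum : Summable fun n => P.integ (P.abs (α n)) := summable_of_inI1 P α hα
    have hu : Tendsto (fun N => (∑' n, P.integ (P.abs (α n)))
        - ∑ j ∈ Finset.range N, P.integ (P.abs (α j))) atTop (𝓝 0) := by
      have ht := hsum.hasSum.tendsto_sum_nat
      have := (tendsto_const_nhds (x := ∑' n, P.integ (P.abs (α n)))
        (f := atTop (α := ℕ))).sub ht
      simpa using this
    obtain ⟨N, hNε, hN1⟩ := ((hu.eventually (gt_mem_nhds hε)).and
      (eventually_ge_atTop 1)).exists
    obtain ⟨rN, hrN⟩ := norm1_exists P _ (summable_subSeq_trunc P α N hsum)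
    refine ⟨psum P α (N-1), rN, ?_, ?_⟩
    · unfold Norm1Is at hrN ⊢
      refine hrN.congr' ?_
      refine eventuallyEq_of_mem (mem_atTop (2*N)) fun M hM => ?_
      rw [psum_subSeq_embed_eq P α N M hN1 hM]
    · have hle : rN ≤ (∑' n, P.integ (P.abs (α n)))
          - ∑ j ∈ Finset.range N, P.integ (P.abs (α j)) := by
        refine le_of_tendsto hrN (eventually_atTop.2 ⟨2*N, fun M hM => ?_⟩)
        exact integ_abs_psum_subSeq_trunc_le P α N M hM hsum
      linarith
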